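/- Let G be a finite simple graph and S ⊆ V(G) with |S| = s. The polynomial E(G;S,q) has degree at most 1 (is linear) if and only if for all k with 1 ≤ k ≤ s, Σ_{W ⊆ S, |W| = k} |Obs(G;W)| = C(s−1, k−1) · Σ_{v ∈ S} |Obs(G;{v})|, where C(·,·) denotes a binomial coefficient. -/

import Mathlib

open Polynomial

/-- The closed neighborhood `N[S]` of a set of vertices. -/
def closedNbhd {V : Type*} (G : SimpleGraph V) (S : Set V) : Set V :=
  ⋃ v ∈ S, insert v (G.neighborSet v)

/-- A set `B` is closed under the zero forcing step: whenever `x ∈ B` has exactly one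
neighbor `y` outside `B`, then `y` is already in `B`. -/
def PDClosed {V : Type*} (G : SimpleGraph V) (B : Set V) : Prop :=
  ∀ x ∈ B, ∀ y : V, G.neighborSet x \ B = {y} → y ∈ B

/-- `Obs G S` is the set of observed vertices of the power domination process started with
PMU placement `S`: the least superset of `N[S]` closed under the zero forcing step. -/
def Obs {V : Type*} (G : SimpleGraph V) (S : Set V) : Set V :=
  ⋂₀ {B : Set V | closedNbhd G S ⊆ B ∧ PDClosed G B}

/-- The expected value polynomial
`E(G;S,q) = Σ_{W ⊆ S} |Obs(G;W)| q^{|S∖W|} (1−q)^{|W|}`. -/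
noncomputable def expol {V : Type*} (G : SimpleGraph V) (S : Finset V) : Polynomial ℝ :=
  ∑ W ∈ S.powerset,
    ((Obs G ↑W).ncard : Polynomial ℝ) * X ^ (S.card - W.card) * (1 - X) ^ W.card

lemma obs_empty {V : Type*} (G : SimpleGraph V) : Obs G (∅ : Set V) = ∅ := by
  apply Set.eq_empty_of_subset_empty
  apply Set.sInter_subset_of_mem
  constructor
  · simp [closedNbhd]
  · intro x hx; exact hx.elim

lemma indep (n : ℕ) (c : ℕ → ℝ)
    (h : ∑ k ∈ Finset.range (n+1), C (c k) * X ^ (n - k) * (1 - X) ^ k = 0) :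
    ∀ k ≤ n, c k = 0 := by
  induction n generalizing c with
  | zero =>
    intro k hk
    interval_cases k
    simpa using congrArg (fun p => p.coeff 0) h
  | succ n ih =>
    have hlast : c (n+1) = 0 := by
      have := congrArg (fun p => p.eval 0) h
      simp only [eval_finset_sum, eval_mul, eval_pow, eval_C, eval_X, eval_sub, eval_one,
        eval_zero] at this
      rw [Finset.sum_range_succ] at this
      simp only [Nat.sub_self, pow_zero, sub_zero, one_pow, mul_one] at this
      have hz : ∑ x ∈ Finset.range (n+1), c x * (0:ℝ) ^ (n + 1 - x) = 0 := by
        apply Finset.sum_eq_zero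
        intro k hk
        rw [Finset.mem_range] at hk
        rw [zero_pow (by omega)]
        ring
      rw [hz] at this
      linarith
    intro k hk
    rcases Nat.lt_or_ge k (n+1) with hk' | hk'
    · have hrest : ∑ k ∈ Finset.range (n+1), C (c k) * X ^ (n - k) * (1 - X) ^ k = 0 := by
        rw [Finset.sum_range_succ, hlast] at h
        simp only [map_zero, zero_mul] at h
        rw [add_zero] at h
        have hX : (X : ℝ[X]) *
            ∑ k ∈ Finset.range (n+1), C (c k) * X ^ (n - k) * (1 - X) ^ k = 0 := by
          rw [Finset.mul_sum, ← h]
          apply Finset.sum_congr rfl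
          intro k hk
          rw [Finset.mem_range] at hk
          have : n + 1 - k = (n - k) + 1 := by omega
          rw [this]; ring
        exact (mul_eq_zero.mp hX).resolve_left X_ne_zero
      exact ih c hrest k (by omega)
    · have : k = n + 1 := by omega
      rw [this]; exact hlast

lemma binom_id (s : ℕ) (hs : 1 ≤ s) :
    ∑ k ∈ Finset.range (s+1),
      (if k = 0 then 0 else C ((Nat.choose (s-1) (k-1) : ℝ))) * X ^ (s - k) * (1 - X) ^ k
      = 1 - X := by
  obtain ⟨m, rfl⟩ : ∃ m, s = m + 1 := ⟨s - 1, by omega⟩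
  rw [Finset.sum_range_succ']
  have hterms : ∀ k ∈ Finset.range (m+1),
      (if k+1 = 0 then (0:ℝ[X]) else C ((Nat.choose (m+1-1) (k+1-1) : ℝ)))
        * X ^ (m+1 - (k+1)) * (1 - X) ^ (k+1)
      = (C ((m.choose k : ℝ)) * X ^ (m-k) * (1-X) ^ k) * (1-X) := by
    intro k hk
    rw [if_neg (Nat.succ_ne_zero k)]
    have e1 : k+1-1 = k := rfl
    have e2 : m+1-(k+1) = m-k := by omega
    have e3 : m+1-1 = m := rfl
    rw [e1, e2, e3]; ring
  rw [Finset.sum_congr rfl hterms, if_pos rfl, ← Finset.sum_mul]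
  have hb : ∑ k ∈ Finset.range (m+1), C ((m.choose k : ℝ)) * X ^ (m-k) * (1-X) ^ k = 1 := by
    have h := add_pow (1 - X : ℝ[X]) X m
    rw [sub_add_cancel, one_pow] at h
    conv_rhs => rw [h]
    apply Finset.sum_congr rfl
    intro k hk
    rw [Polynomial.C_eq_natCast]
    ring
  rw [hb]
  simp

lemma deg_one_sub_X : (1 - X : ℝ[X]).degree = 1 := by
  have : (1 - X : ℝ[X]) = -(X - C 1) := by simp [neg_sub]
  rw [this, degree_neg, degree_X_sub_C]

lemma expol_eq {V : Type} (G : SimpleGraph V) (S : Finset V) :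
    expol G S = ∑ k ∈ Finset.range (S.card + 1),
      C (((∑ W ∈ Finset.powersetCard k S, (Obs G ↑W).ncard : ℕ) : ℝ))
        * X ^ (S.card - k) * (1 - X) ^ k := by
  rw [expol, Finset.sum_powerset]
  apply Finset.sum_congr rfl
  intro k hk
  rw [Polynomial.C_eq_natCast, Nat.cast_sum, Finset.sum_mul, Finset.sum_mul]
  apply Finset.sum_congr rfl
  intro W hW
  rw [(Finset.mem_powersetCard.mp hW).2]

theorem stmt1 {V : Type} [Fintype V] (G : SimpleGraph V) (S : Finset V)
    (s : ℕ) (hs : S.card = s) :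
    (expol G S).degree ≤ 1 ↔
      ∀ k, 1 ≤ k → k ≤ s →
        ∑ W ∈ Finset.powersetCard k S, (Obs G ↑W).ncard
          = Nat.choose (s - 1) (k - 1) * ∑ v ∈ S, (Obs G {v}).ncard := by
  set a : ℕ → ℕ := fun k => ∑ W ∈ Finset.powersetCard k S, (Obs G ↑W).ncard with ha
  have hA0 : a 0 = 0 := by
    simp [ha, Finset.powersetCard_zero, obs_empty]
  have hA1 : a 1 = ∑ v ∈ S, (Obs G {v}).ncard := by
    simp only [ha, Finset.powersetCard_one, Finset.sum_map, Function.Embedding.coeFn_mk,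
      Finset.coe_singleton]
  have hexp : expol G S = ∑ k ∈ Finset.range (s + 1),
      C ((a k : ℝ)) * X ^ (s - k) * (1 - X) ^ k := by
    rw [expol_eq, hs]
  rcases Nat.eq_zero_or_pos s with hs0 | hs1
  · subst hs0
    constructor
    · intro _ k h1 h0; omega
    · intro _
      rw [hexp]
      simp [hA0]
  · have hB : C ((a 1 : ℝ)) * (1 - X) = ∑ k ∈ Finset.range (s+1),
        C ((a 1 : ℝ)) * ((if k = 0 then 0 else C ((Nat.choose (s-1) (k-1) : ℝ)))
          * X ^ (s - k) * (1 - X) ^ k) := by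
      rw [← Finset.mul_sum, binom_id s hs1]
    constructor
    · -- forward direction
      intro hdeg
      set D : ℕ → ℝ :=
        fun k => (a k : ℝ) - (if k = 0 then 0 else ((Nat.choose (s-1) (k-1) : ℝ)) * (a 1 : ℝ))
        with hD
      have hD0 : D 0 = 0 := by simp [hD, hA0]
      have hD1 : D 1 = 0 := by simp [hD]
      have hPsub : ∑ k ∈ Finset.range (s+1), C (D k) * X ^ (s - k) * (1 - X) ^ k
          = expol G S - C ((a 1 : ℝ)) * (1 - X) := by
        conv_rhs => rw [hexp, hB]
        rw [← Finset.sum_sub_distrib]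
        apply Finset.sum_congr rfl
        intro k hk
        by_cases hk0 : k = 0
        · subst hk0
          simp [hD, hA0]
        · rw [hD]
          simp only [if_neg hk0]
          rw [map_sub, map_mul]
          ring
      have hPdeg : (∑ k ∈ Finset.range (s+1),
          C (D k) * X ^ (s - k) * (1 - X) ^ k).degree ≤ 1 := by
        rw [hPsub]
        refine le_trans (degree_sub_le _ _) (max_le hdeg ?_)
        refine le_trans (degree_mul_le _ _) ?_
        rw [deg_one_sub_X]
        calc (C ((a 1:ℝ))).degree + 1 ≤ 0 + 1 := by
              exact add_le_add_left degree_C_le 1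
          _ = 1 := by rw [zero_add]
      have hdvd : (1 - X : ℝ[X]) ^ 2 ∣
          ∑ k ∈ Finset.range (s+1), C (D k) * X ^ (s - k) * (1 - X) ^ k := by
        apply Finset.dvd_sum
        intro k hk
        rcases Nat.lt_or_ge k 2 with hk2 | hk2
        · interval_cases k
          · rw [hD0]; simp
          · rw [hD1]; simp
        · exact Dvd.dvd.mul_left (pow_dvd_pow _ hk2) _
      have hPzero : ∑ k ∈ Finset.range (s+1), C (D k) * X ^ (s - k) * (1 - X) ^ k = 0 := by
        obtain ⟨Q, hQ⟩ := hdvd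
        rcases eq_or_ne Q 0 with hQ0 | hQ0
        · rw [hQ, hQ0, mul_zero]
        · exfalso
          have hdp : ((1 - X : ℝ[X]) ^ 2).degree = 2 := by
            rw [degree_pow, deg_one_sub_X]; rfl
          have h2 : (2 : WithBot ℕ) ≤
              (∑ k ∈ Finset.range (s+1), C (D k) * X ^ (s - k) * (1 - X) ^ k).degree := by
            rw [hQ, degree_mul, hdp]
            have : (0 : WithBot ℕ) ≤ Q.degree := zero_le_degree_iff.mpr hQ0
            calc (2 : WithBot ℕ) = 2 + 0 := by rw [add_zero]
              _ ≤ 2 + Q.degree := add_le_add_right this 2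
          have := le_trans h2 hPdeg
          norm_num at this
      have hDall := indep s D hPzero
      intro k h1 hks
      have hDk := hDall k hks
      rw [hD] at hDk
      simp only [if_neg (by omega : ¬ k = 0)] at hDk
      have : (a k : ℝ) = (Nat.choose (s-1) (k-1) : ℝ) * (a 1 : ℝ) := by linarith
      rw [← hA1]
      exact_mod_cast this
    · -- reverse direction
      intro h
      have hkey : expol G S = C ((a 1 : ℝ)) * (1 - X) := by
        rw [hexp, hB]
        apply Finset.sum_congr rfl
        intro k hk
        by_cases hk0 : k = 0
        · subst hk0; simp [hA0]
        · rw [Finset.mem_range] at hk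
          have hak : a k = Nat.choose (s-1) (k-1) * a 1 := by
            rw [hA1]
            exact h k (by omega) (by omega)
          rw [if_neg hk0, hak]
          push_cast
          rw [map_mul]
          ring
      rw [hkey]
      refine le_trans (degree_mul_le _ _) ?_
      rw [deg_one_sub_X]
      calc (C ((a 1:ℝ))).degree + 1 ≤ 0 + 1 := add_le_add_left degree_C_le 1
        _ = 1 := by rw [zero_add]
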